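/- arXiv:2309.05970 — 4 statements merged into one kernel-verified Lean document; each statement's English description precedes it below -/
import Mathlib

section
/- Let q be an element of a field and for 1 ≤ i ≤ n−1 define the Demazure–Lusztig operator T_i acting on rational functions h(x_1,…,x_n) by T_i·h = q·h − ((x_i − q·x_{i+1})/(x_i − x_{i+1}))·(h − s_i·h), where s_i swaps the variables x_i and x_{i+1}. Then T_i satisfies the quadratic Hecke relation (T_i − q)(T_i + 1) = 0, i.e. for every rational function h one has T_i(T_i h) = (q−1)·T_i h + q·h. -/
/-- The Demazure–Lusztig operator
`T h = q*h - ((x_i - q x_{i+1})/(x_i - x_{i+1}))*(h - s h)` acting on the field of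
rational functions (modelled as an abstract field `K` equipped with the variables
`xi = x_i`, `xi1 = x_{i+1}` and the involutive field homomorphism `s` swapping them
and fixing `q`) satisfies the quadratic Hecke relation `(T - q)(T + 1) = 0`, i.e.
`T (T h) = (q - 1) * T h + q * h` for every rational function `h`. -/
theorem demazure_lusztig_quadratic {K : Type*} [Field K]
    (q xi xi1 : K) (hx : xi ≠ xi1)
    (s : K →+* K) (hs : Function.Involutive s)
    (hsq : s q = q) (hs1 : s xi = xi1) (hs2 : s xi1 = xi)
    (T : K → K)
    (hT : ∀ h : K, T h = q * h - (xi - q * xi1) / (xi - xi1) * (h - s h)) :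
    ∀ h : K, T (T h) = (q - 1) * T h + q * h := by
  intro h
  have hd : xi - xi1 ≠ 0 := sub_ne_zero.mpr hx
  have hd2 : xi1 - xi ≠ 0 := sub_ne_zero.mpr hx.symm
  simp only [hT, map_sub, map_mul, map_div₀, hsq, hs1, hs2, hs h]
  field_simp
  ring
end

section
/- The Demazure–Lusztig operators T_i = q − ((x_i − q x_{i+1})/(x_i − x_{i+1}))(1 − s_i), 1 ≤ i ≤ n−1, satisfy the braid relation T_i T_{i+1} T_i = T_{i+1} T_i T_{i+1} as operators on rational functions in x_1,…,x_n, for all 1 ≤ i ≤ n−2. -/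
/-- Braid relation `T_i T_{i+1} T_i = T_{i+1} T_i T_{i+1}` for the
Demazure–Lusztig operators. We model the field of rational functions in
`x_1, …, x_n` as an abstract field `K` containing the three (pairwise distinct)
relevant variables `x1 = x_i`, `x2 = x_{i+1}`, `x3 = x_{i+2}`, equipped with the
involutive field homomorphisms `s = s_i` (swapping `x1, x2`, fixing `x3` and `q`)
and `t = s_{i+1}` (swapping `x2, x3`, fixing `x1` and `q`), which satisfy the braid
relation `s t s = t s t`.  Then `T1 (T2 (T1 h)) = T2 (T1 (T2 h))` for all `h`. -/
theorem demazure_lusztig_braid {K : Type*} [Field K]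
    (q x1 x2 x3 : K) (h12 : x1 ≠ x2) (h23 : x2 ≠ x3) (h13 : x1 ≠ x3)
    (s t : K →+* K) (hs : Function.Involutive s) (ht : Function.Involutive t)
    (hsq : s q = q) (htq : t q = q)
    (hs1 : s x1 = x2) (hs2 : s x2 = x1) (hs3 : s x3 = x3)
    (ht1 : t x1 = x1) (ht2 : t x2 = x3) (ht3 : t x3 = x2)
    (hbraid : ∀ y : K, s (t (s y)) = t (s (t y)))
    (T1 T2 : K → K)
    (hT1 : ∀ h : K, T1 h = q * h - (x1 - q * x2) / (x1 - x2) * (h - s h))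
    (hT2 : ∀ h : K, T2 h = q * h - (x2 - q * x3) / (x2 - x3) * (h - t h)) :
    ∀ h : K, T1 (T2 (T1 h)) = T2 (T1 (T2 h)) := by
  intro h
  have d12 : x1 - x2 ≠ 0 := sub_ne_zero.mpr h12
  have d23 : x2 - x3 ≠ 0 := sub_ne_zero.mpr h23
  have d13 : x1 - x3 ≠ 0 := sub_ne_zero.mpr h13
  have d21 : x2 - x1 ≠ 0 := sub_ne_zero.mpr h12.symm
  have d32 : x3 - x2 ≠ 0 := sub_ne_zero.mpr h23.symm
  set a1 : K := (x1 - q * x2) / (x1 - x2) with ha1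
  set a2 : K := (x2 - q * x3) / (x2 - x3) with ha2
  set a3 : K := (x1 - q * x3) / (x1 - x3) with ha3
  have hSa1 : s a1 = 1 + q - a1 := by
    rw [ha1, map_div₀, map_sub, map_sub, map_mul, hs1, hs2, hsq]
    field_simp
    ring
  have hSa2 : s a2 = a3 := by
    rw [ha2, ha3, map_div₀, map_sub, map_sub, map_mul, hs2, hs3, hsq]
  have hSa3 : s a3 = a2 := by
    rw [ha2, ha3, map_div₀, map_sub, map_sub, map_mul, hs1, hs3, hsq]
  have hTa1 : t a1 = a3 := by
    rw [ha1, ha3, map_div₀, map_sub, map_sub, map_mul, ht1, ht2, htq]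
  have hTa3 : t a3 = a1 := by
    rw [ha1, ha3, map_div₀, map_sub, map_sub, map_mul, ht1, ht3, htq]
  have hTa2 : t a2 = 1 + q - a2 := by
    rw [ha2, map_div₀, map_sub, map_sub, map_mul, ht2, ht3, htq]
    field_simp
    ring
  have hrel : a1 * a3 + a2 * a3 - a1 * a2 - a3 - q * a3 + q = 0 := by
    have key : a1 * a3 + a2 * a3 + q = a1 * a2 + a3 + q * a3 := by
      rw [ha1, ha2, ha3]
      field_simp
      ring
    linear_combination key
  simp only [hT1, hT2, map_sub, map_mul, hsq, htq, hSa1, hSa2, hSa3, hTa1, hTa2, hTa3,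
    hs h, ht h, hbraid h]
  linear_combination (a1 * (h - s h) - a2 * (h - t h)) * hrel
end

section
/- For every integer m ≥ 1 and real numbers x_1,…,x_m, the following Gaussian integral evaluation holds: (1/(2π))^m · i^{m(m−1)/2} · ∫_{ℝ^m} ∏_{1 ≤ i < j ≤ m} (u_j − u_i) · ∏_{k=1}^m e^{−i x_k u_k − u_k²/2} du_1⋯du_m = (1/(2π))^{m/2} · ∏_{k=1}^m e^{−x_k²/2} · ∏_{1 ≤ i < j ≤ m} (x_j − x_i). -/
open MeasureTheory Complex Real Polynomial Finset


lemma integrable_abs_pow_gauss (n : ℕ) : Integrable (fun t : ℝ => |t| ^ n * rexp (-(1/2) * t ^ 2)) := by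
  have h := integrable_rpow_mul_exp_neg_mul_sq (b := 1/2) (by norm_num) (s := n)
    (lt_of_lt_of_le (by norm_num) (Nat.cast_nonneg n))
  have h2 : Integrable (fun t : ℝ => t ^ n * rexp (-(1/2) * t ^ 2)) := by
    simpa [Real.rpow_natCast] using h
  have := h2.abs
  refine this.congr (Filter.Eventually.of_forall fun t => ?_)
  simp [abs_mul, _root_.abs_pow, _root_.abs_of_nonneg (Real.exp_pos _).le]

lemma norm_mom (n : ℕ) (a t : ℝ) :
    ‖(t : ℂ) ^ n * Complex.exp (-(Complex.I * a * t) - t ^ 2 / 2)‖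
      = |t| ^ n * rexp (-(1/2) * t ^ 2) := by
  rw [norm_mul, norm_pow, Complex.norm_exp]
  congr 2
  · simp
  · simp [Complex.sub_re, Complex.div_re, ← Complex.ofReal_pow]
    ring

lemma integrable_mom (n : ℕ) (a : ℝ) :
    Integrable (fun t : ℝ => (t : ℂ) ^ n * Complex.exp (-(Complex.I * a * t) - t ^ 2 / 2)) := by
  refine (integrable_abs_pow_gauss n).mono' (Continuous.aestronglyMeasurable (by fun_prop))
    (Filter.Eventually.of_forall fun t => le_of_eq (norm_mom n a t))

lemma iteratedDeriv_ofReal (g : ℝ → ℝ) (hg : ∀ k, Differentiable ℝ (deriv^[k] g)) (n : ℕ) :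
    iteratedDeriv n (fun y : ℝ => (g y : ℂ)) = fun y => ((deriv^[n] g y : ℝ) : ℂ) := by
  induction n with
  | zero => simp
  | succ n ih =>
    rw [iteratedDeriv_succ, ih]
    funext y
    rw [Function.iterate_succ_apply']
    exact (((hg n y).hasDerivAt).ofReal_comp).deriv


lemma gauss_deriv_iter (k : ℕ) : Differentiable ℝ (deriv^[k] (fun y : ℝ => rexp (-(y ^ 2 / 2)))) := by
  have h : deriv^[k] (fun y : ℝ => rexp (-(y ^ 2 / 2)))
      = fun x => (-1 : ℝ) ^ k * aeval x (hermite k) * rexp (-(x ^ 2 / 2)) :=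
    funext fun x => Polynomial.deriv_gaussian_eq_hermite_mul_gaussian k x
  rw [h]
  exact ((Polynomial.differentiable_aeval _).const_mul _).mul
    (Real.differentiable_exp.comp (((differentiable_id.pow 2).div_const 2).neg))

noncomputable def G : ℝ → ℝ := fun t => Real.sqrt (2 * π) * rexp (-((2 * π * t) ^ 2 / 2))

lemma derivIter_G (n : ℕ) :
    deriv^[n] G = fun t => Real.sqrt (2 * π) * (2 * π) ^ n *
      deriv^[n] (fun y : ℝ => rexp (-(y ^ 2 / 2))) (2 * π * t) := by
  induction n with
  | zero => funext t; simp [G]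
  | succ n ih =>
    rw [Function.iterate_succ_apply', ih]
    funext t
    have hD : ∀ y, HasDerivAt (deriv^[n] (fun y : ℝ => rexp (-(y ^ 2 / 2))))
        (deriv^[n+1] (fun y : ℝ => rexp (-(y ^ 2 / 2))) y) y := by
      intro y
      rw [Function.iterate_succ_apply']
      exact (gauss_deriv_iter n y).hasDerivAt
    have base : HasDerivAt (fun s : ℝ => 2 * π * s) (2 * π) t := by
      simpa using (hasDerivAt_id t).const_mul (2 * π)
    have h1 : HasDerivAt (fun t : ℝ => deriv^[n] (fun y : ℝ => rexp (-(y ^ 2 / 2))) (2 * π * t))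
        (deriv^[n+1] (fun y : ℝ => rexp (-(y ^ 2 / 2))) (2 * π * t) * (2 * π)) t :=
      (hD (2 * π * t)).comp t base
    have h2 := (h1.const_mul (Real.sqrt (2 * π) * (2 * π) ^ n)).deriv
    rw [h2]
    ring

lemma G_deriv_iter (k : ℕ) : Differentiable ℝ (deriv^[k] G) := by
  rw [derivIter_G]
  exact ((gauss_deriv_iter k).comp ((differentiable_id.const_mul _))).const_mul _

lemma fourier_gauss : (FourierTransform.fourier fun u : ℝ => Complex.exp (-(u:ℂ) ^ 2 / 2))
    = fun t : ℝ => ((G t : ℝ) : ℂ) := by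
  have hπ : (π:ℂ) ≠ 0 := Complex.ofReal_ne_zero.mpr Real.pi_ne_zero
  have hb : (0:ℝ) < ((1 / (2 * π) : ℂ)).re := by
    simp [Complex.div_re]
    positivity
  have key := fourier_gaussian_pi' hb 0
  have hfun : (fun x : ℝ => Complex.exp (-(x:ℂ) ^ 2 / 2))
      = fun x : ℝ => Complex.exp (-(π:ℂ) * (1 / (2 * π)) * (x:ℂ) ^ 2 + 2 * π * 0 * x) := by
    funext x
    congr 1
    field_simp
    ring
  rw [hfun, key]
  funext t
  have h2π : (0:ℝ) ≤ 1 / (2*π) := by positivity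
  have hcpow : ((1 / (2 * π) : ℂ)) ^ (1/2 : ℂ) = (((Real.sqrt (2*π))⁻¹ : ℝ) : ℂ) := by
    have : ((1 / (2*π) : ℝ) : ℂ) ^ ((1/2 : ℝ) : ℂ) = (((1 / (2*π) : ℝ)) ^ (1/2 : ℝ) : ℝ) :=
      (Complex.ofReal_cpow h2π _).symm
    rw [show ((1 / (2 * π) : ℂ)) = ((1 / (2*π) : ℝ) : ℂ) by push_cast; ring,
      show ((1/2 : ℂ)) = ((1/2 : ℝ) : ℂ) by norm_num, this,
      ← Real.sqrt_eq_rpow, one_div, Real.sqrt_inv]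
  rw [hcpow]
  have h1 : (1 : ℂ) / (((Real.sqrt (2*π))⁻¹ : ℝ) : ℂ) = ((Real.sqrt (2*π) : ℝ) : ℂ) := by
    rw [Complex.ofReal_inv, one_div, inv_inv]
  have h2 : (-(π:ℂ) / (1 / (2 * π)) * ((t:ℂ) + Complex.I * 0) ^ 2)
      = -((2 * (π:ℂ) * t) ^ 2 / 2) := by field_simp; ring
  rw [h1, h2]
  simp only [G]
  push_cast
  ring_nf

theorem oneDim (n : ℕ) (x : ℝ) :
    ∫ u : ℝ, (u:ℂ) ^ n * Complex.exp (-(Complex.I * x * u) - u ^ 2 / 2)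
      = (-Complex.I) ^ n * Real.sqrt (2*π) * ((aeval x (hermite n) : ℝ) : ℂ)
        * Complex.exp (-(x:ℂ) ^ 2 / 2) := by
  have h2π : (2 * π : ℝ) ≠ 0 := by positivity
  have hint : ∀ k : ℕ, (k:ℕ∞) ≤ (n:ℕ∞) →
      Integrable (fun u : ℝ => u ^ k • Complex.exp (-(u:ℂ) ^ 2 / 2)) := by
    intro k _
    refine (integrable_mom k 0).congr (Filter.Eventually.of_forall fun u => ?_)
    push_cast
    rw [real_smul]
    push_cast
    ring_nf
  have key := Real.iteratedDeriv_fourier (f := fun u : ℝ => Complex.exp (-(u:ℂ) ^ 2 / 2))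
    (N := n) (n := n) hint le_rfl
  rw [fourier_gauss, iteratedDeriv_ofReal G G_deriv_iter n, derivIter_G] at key
  have L := congrFun key (x / (2*π))
  have hw : 2 * π * (x / (2*π)) = x := by field_simp
  dsimp only at L
  rw [hw, Polynomial.deriv_gaussian_eq_hermite_mul_gaussian] at L
  rw [Real.fourier_real_eq_integral_exp_smul] at L
  have hR : (∫ v : ℝ, Complex.exp (((-2 * π * v * (x / (2*π)) : ℝ) : ℂ) * Complex.I) •
        ((-2 * (π:ℂ) * Complex.I * v) ^ n • Complex.exp (-(v:ℂ) ^ 2 / 2)))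
      = (-2 * (π:ℂ) * Complex.I) ^ n *
        ∫ u : ℝ, (u:ℂ) ^ n * Complex.exp (-(Complex.I * x * u) - u ^ 2 / 2) := by
    rw [← MeasureTheory.integral_const_mul]
    congr 1
    funext v
    have hv : (-2 * π * v * (x / (2*π)) : ℝ) = -(v * x) := by field_simp
    rw [hv, smul_eq_mul, smul_eq_mul, mul_pow]
    rw [show (-(Complex.I * x * v) - (v:ℂ) ^ 2 / 2) = ((-(v * x) : ℝ) : ℂ) * Complex.I + (-(v:ℂ)^2/2) by push_cast; ring]
    rw [Complex.exp_add]
    ring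
  rw [hR] at L
  have hne : ((-2 * (π:ℂ) * Complex.I) ^ n) ≠ 0 := by
    apply pow_ne_zero
    simp [Complex.I_ne_zero, Complex.ofReal_ne_zero, Real.pi_ne_zero]
  apply mul_left_cancel₀ hne
  rw [← L]
  symm
  have e1 : (-2*(π:ℂ)*Complex.I)^n * (-Complex.I)^n = (-2*(π:ℂ))^n := by
    rw [← mul_pow]
    congr 1
    linear_combination (2*(π:ℂ)) * Complex.I_mul_I
  calc (-2*(π:ℂ)*Complex.I)^n * ((-Complex.I)^n * (Real.sqrt (2*π) : ℂ) * ((aeval x (hermite n) : ℝ):ℂ) * Complex.exp (-(x:ℂ)^2/2))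
      = ((-2*(π:ℂ)*Complex.I)^n * (-Complex.I)^n) * ((Real.sqrt (2*π):ℂ) * ((aeval x (hermite n) : ℝ):ℂ) * Complex.exp (-(x:ℂ)^2/2)) := by ring
    _ = (-2*(π:ℂ))^n * ((Real.sqrt (2*π):ℂ) * ((aeval x (hermite n) : ℝ):ℂ) * Complex.exp (-(x:ℂ)^2/2)) := by rw [e1]
    _ = ((Real.sqrt (2*π) * (2*π)^n * ((-1)^n * aeval x (hermite n) * rexp (-(x^2/2))) : ℝ) : ℂ) := by
        rw [show (-2*(π:ℂ))^n = (-1)^n*(2*(π:ℂ))^n by rw [← mul_pow]; norm_num]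
        push_cast
        ring

lemma prod_pairs {M : Type*} [CommMonoid M] (m : ℕ) (f : Fin m → Fin m → M) :
    ∏ p ∈ Finset.filter (fun p : Fin m × Fin m => p.1 < p.2) Finset.univ, f p.1 p.2
      = ∏ i, ∏ j ∈ Finset.Ioi i, f i j := by
  rw [Finset.prod_sigma']
  refine Finset.prod_nbij' (fun p => ⟨p.1, p.2⟩) (fun p => (p.1, p.2)) ?_ ?_ ?_ ?_ ?_ <;>
    simp [Finset.mem_sigma]


lemma det_hermite_eq (m : ℕ) (x : Fin m → ℝ) :
    ∑ σ : Equiv.Perm (Fin m), ((Equiv.Perm.sign σ : ℤ) : ℂ) *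
        ∏ k, ((aeval (x k) (hermite (σ k : ℕ)) : ℝ) : ℂ)
      = ∏ i, ∏ j ∈ Finset.Ioi i, ((x j : ℂ) - (x i : ℂ)) := by
  have hconv : ∀ (n : ℕ) (t : ℝ), (((hermite n).map (algebraMap ℤ ℂ)).eval ((t : ℂ)))
      = ((aeval t (hermite n) : ℝ) : ℂ) := by
    intro n t
    rw [eval_map, ← aeval_def, show ((t:ℂ)) = algebraMap ℝ ℂ t from rfl,
      aeval_algebraMap_apply]
    rfl
  have hdeg : ∀ i : Fin m, ((hermite (i:ℕ)).map (algebraMap ℤ ℂ)).natDegree = (i:ℕ) := by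
    intro i
    rw [(hermite_monic _).natDegree_map, natDegree_hermite]
  have hmon : ∀ i : Fin m, (((hermite (i:ℕ)).map (algebraMap ℤ ℂ))).Monic := fun i =>
    (hermite_monic _).map _
  have hdet := Matrix.det_eval_matrixOfPolynomials_eq_det_vandermonde
    (fun i => ((x i : ℂ))) (fun i => (hermite (i:ℕ)).map (algebraMap ℤ ℂ)) hdeg hmon
  have h1 : (Matrix.of fun i j : Fin m =>
      (((hermite (j:ℕ)).map (algebraMap ℤ ℂ)).eval ((x i : ℂ)))).det
      = ∏ i, ∏ j ∈ Finset.Ioi i, ((x j : ℂ) - (x i : ℂ)) := by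
    rw [← hdet, Matrix.det_vandermonde]
  rw [← h1, ← Matrix.det_transpose, Matrix.det_apply]
  apply Finset.sum_congr rfl
  intro σ _
  rw [Units.smul_def, zsmul_eq_mul]
  congr 1
  apply Finset.prod_congr rfl
  intro k _
  rw [Matrix.transpose_apply, Matrix.of_apply, hconv]

/-- the Gaussian integral evaluation
`(1/(2π))^m · i^{m(m−1)/2} · ∫_{ℝ^m} ∏_{i<j}(u_j − u_i) ∏_k e^{−i x_k u_k − u_k²/2} du
  = (1/(2π))^{m/2} ∏_k e^{−x_k²/2} ∏_{i<j}(x_j − x_i)`. -/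
theorem gaussian_vandermonde_integral (m : ℕ) (hm : 1 ≤ m) (x : Fin m → ℝ) :
    (1 / (2 * (Real.pi : ℂ))) ^ m * Complex.I ^ (m * (m - 1) / 2) *
      ∫ u : Fin m → ℝ,
        ((∏ p ∈ Finset.filter (fun p : Fin m × Fin m => p.1 < p.2) Finset.univ,
            ((u p.2 : ℂ) - (u p.1 : ℂ))) *
          ∏ k : Fin m,
            Complex.exp (-(Complex.I * (x k : ℂ) * (u k : ℂ)) - (u k : ℂ) ^ 2 / 2))
    = ((Real.sqrt (2 * Real.pi) : ℂ))⁻¹ ^ m *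
        (∏ k : Fin m, Complex.exp (-(x k : ℂ) ^ 2 / 2)) *
        ∏ p ∈ Finset.filter (fun p : Fin m × Fin m => p.1 < p.2) Finset.univ,
          ((x p.2 : ℂ) - (x p.1 : ℂ)) := by
  classical
  -- Step 1: pointwise expansion of the integrand
  have hpt : (fun u : Fin m → ℝ =>
      ((∏ p ∈ Finset.filter (fun p : Fin m × Fin m => p.1 < p.2) Finset.univ,
          ((u p.2 : ℂ) - (u p.1 : ℂ))) *
        ∏ k : Fin m, Complex.exp (-(Complex.I * (x k : ℂ) * (u k : ℂ)) - (u k : ℂ) ^ 2 / 2)))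
      = fun u => ∑ σ : Equiv.Perm (Fin m), ((Equiv.Perm.sign σ : ℤ) : ℂ) *
          ∏ k : Fin m, ((u k : ℂ) ^ ((σ⁻¹ k : Fin m) : ℕ) *
            Complex.exp (-(Complex.I * (x k : ℂ) * (u k : ℂ)) - (u k : ℂ) ^ 2 / 2)) := by
    funext u
    rw [prod_pairs m (fun i j => ((u j : ℂ) - (u i : ℂ))),
      ← Matrix.det_vandermonde (fun i => (u i : ℂ)), Matrix.det_apply, Finset.sum_mul]
    apply Finset.sum_congr rfl
    intro σ _
    rw [Units.smul_def, zsmul_eq_mul, mul_assoc]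
    congr 1
    have h1 := Equiv.prod_comp σ (fun k => (u k : ℂ) ^ ((σ⁻¹ k : Fin m) : ℕ))
    simp only [show ∀ k, σ⁻¹ (σ k) = k from fun k => Equiv.Perm.inv_eq_iff_eq.mpr rfl] at h1
    simp only [Matrix.vandermonde_apply]
    rw [h1, ← Finset.prod_mul_distrib]
  rw [hpt]
  -- Step 2: swap sum and integral
  have hint : ∀ σ : Equiv.Perm (Fin m), Integrable (fun u : Fin m → ℝ =>
      ∏ k : Fin m, ((u k : ℂ) ^ ((σ⁻¹ k : Fin m) : ℕ) *
        Complex.exp (-(Complex.I * (x k : ℂ) * (u k : ℂ)) - (u k : ℂ) ^ 2 / 2))) := by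
    intro σ
    exact Integrable.fintype_prod (f := fun (k : Fin m) (t : ℝ) => (t : ℂ) ^ ((σ⁻¹ k : Fin m) : ℕ) *
      Complex.exp (-(Complex.I * (x k : ℂ) * (t : ℂ)) - (t : ℂ) ^ 2 / 2))
      (fun k => integrable_mom _ _)
  rw [integral_finset_sum _ (fun σ _ => (hint σ).const_mul _)]
  -- Step 3: compute each term
  have hterm : ∀ σ : Equiv.Perm (Fin m),
      (∫ u : Fin m → ℝ, ((Equiv.Perm.sign σ : ℤ) : ℂ) *
        ∏ k : Fin m, ((u k : ℂ) ^ ((σ⁻¹ k : Fin m) : ℕ) *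
          Complex.exp (-(Complex.I * (x k : ℂ) * (u k : ℂ)) - (u k : ℂ) ^ 2 / 2)))
      = ((Equiv.Perm.sign σ : ℤ) : ℂ) *
          ((-Complex.I) ^ (m * (m-1)/2) * ((Real.sqrt (2*π) : ℂ)) ^ m *
            (∏ k : Fin m, Complex.exp (-(x k : ℂ) ^ 2 / 2)) *
            ∏ k : Fin m, ((aeval (x k) (hermite ((σ⁻¹ k : Fin m) : ℕ)) : ℝ) : ℂ)) := by
    intro σ
    rw [MeasureTheory.integral_const_mul]
    congr 1
    rw [MeasureTheory.integral_fintype_prod_volume_eq_prod (ι := Fin m)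
      (f := fun (k : Fin m) (t : ℝ) => (t : ℂ) ^ ((σ⁻¹ k : Fin m) : ℕ) *
        Complex.exp (-(Complex.I * (x k : ℂ) * (t : ℂ)) - (t : ℂ) ^ 2 / 2))]
    have : ∀ k : Fin m, (∫ t : ℝ, (t : ℂ) ^ ((σ⁻¹ k : Fin m) : ℕ) *
        Complex.exp (-(Complex.I * (x k : ℂ) * (t : ℂ)) - (t : ℂ) ^ 2 / 2))
        = (-Complex.I) ^ ((σ⁻¹ k : Fin m) : ℕ) * (Real.sqrt (2*π) : ℂ) *
          ((aeval (x k) (hermite ((σ⁻¹ k : Fin m) : ℕ)) : ℝ) : ℂ) *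
          Complex.exp (-(x k : ℂ) ^ 2 / 2) := fun k => oneDim _ _
    rw [Finset.prod_congr rfl (fun k _ => this k)]
    rw [Finset.prod_mul_distrib, Finset.prod_mul_distrib, Finset.prod_mul_distrib]
    rw [Finset.prod_pow_eq_pow_sum]
    have hsum : ∑ k : Fin m, ((σ⁻¹ k : Fin m) : ℕ) = m * (m-1)/2 := by
      rw [Equiv.sum_comp (σ⁻¹ : Equiv.Perm (Fin m)) (fun j : Fin m => (j : ℕ)),
        Fin.sum_univ_eq_sum_range (fun i => i) m, Finset.sum_range_id]
    rw [hsum, Finset.prod_const, Finset.card_univ, Fintype.card_fin]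
    ring
  rw [Finset.sum_congr rfl (fun σ _ => hterm σ)]
  -- Step 4: collect constants and the permutation sum
  have hcomm : ∀ σ : Equiv.Perm (Fin m),
      ((Equiv.Perm.sign σ : ℤ) : ℂ) *
        ((-Complex.I) ^ (m * (m-1)/2) * ((Real.sqrt (2*π) : ℂ)) ^ m *
          (∏ k : Fin m, Complex.exp (-(x k : ℂ) ^ 2 / 2)) *
          ∏ k : Fin m, ((aeval (x k) (hermite ((σ⁻¹ k : Fin m) : ℕ)) : ℝ) : ℂ))
      = ((-Complex.I) ^ (m * (m-1)/2) * ((Real.sqrt (2*π) : ℂ)) ^ m *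
          (∏ k : Fin m, Complex.exp (-(x k : ℂ) ^ 2 / 2))) *
        (((Equiv.Perm.sign σ : ℤ) : ℂ) *
          ∏ k : Fin m, ((aeval (x k) (hermite ((σ⁻¹ k : Fin m) : ℕ)) : ℝ) : ℂ)) := by
    intro σ; ring
  rw [Finset.sum_congr rfl (fun σ _ => hcomm σ), ← Finset.mul_sum]
  have hsum2 : (∑ σ : Equiv.Perm (Fin m), (((Equiv.Perm.sign σ : ℤ) : ℂ) *
      ∏ k : Fin m, ((aeval (x k) (hermite ((σ⁻¹ k : Fin m) : ℕ)) : ℝ) : ℂ)))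
      = ∏ p ∈ Finset.filter (fun p : Fin m × Fin m => p.1 < p.2) Finset.univ,
          ((x p.2 : ℂ) - (x p.1 : ℂ)) := by
    have hre := Equiv.sum_comp (Equiv.inv (Equiv.Perm (Fin m)))
      (fun τ : Equiv.Perm (Fin m) => ((Equiv.Perm.sign τ : ℤ) : ℂ) *
        ∏ k : Fin m, ((aeval (x k) (hermite ((τ k : Fin m) : ℕ)) : ℝ) : ℂ))
    simp only [Equiv.inv_apply] at hre
    have hsgn : ∀ σ : Equiv.Perm (Fin m),
        ((Equiv.Perm.sign σ⁻¹ : ℤ) : ℂ) = ((Equiv.Perm.sign σ : ℤ) : ℂ) := by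
      intro σ; rw [Equiv.Perm.sign_inv]
    calc (∑ σ : Equiv.Perm (Fin m), (((Equiv.Perm.sign σ : ℤ) : ℂ) *
          ∏ k : Fin m, ((aeval (x k) (hermite ((σ⁻¹ k : Fin m) : ℕ)) : ℝ) : ℂ)))
        = ∑ σ : Equiv.Perm (Fin m), (((Equiv.Perm.sign σ⁻¹ : ℤ) : ℂ) *
          ∏ k : Fin m, ((aeval (x k) (hermite ((σ⁻¹ k : Fin m) : ℕ)) : ℝ) : ℂ)) := by
          exact Finset.sum_congr rfl (fun σ _ => by rw [hsgn])
      _ = ∑ σ : Equiv.Perm (Fin m), (((Equiv.Perm.sign σ : ℤ) : ℂ) *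
          ∏ k : Fin m, ((aeval (x k) (hermite ((σ k : Fin m) : ℕ)) : ℝ) : ℂ)) := hre
      _ = ∏ i, ∏ j ∈ Finset.Ioi i, ((x j : ℂ) - (x i : ℂ)) := det_hermite_eq m x
      _ = ∏ p ∈ Finset.filter (fun p : Fin m × Fin m => p.1 < p.2) Finset.univ,
          ((x p.2 : ℂ) - (x p.1 : ℂ)) := (prod_pairs m (fun i j => ((x j : ℂ) - (x i : ℂ)))).symm
  rw [hsum2]
  -- Step 5: scalar bookkeeping
  have hS : ((Real.sqrt (2*π) : ℂ)) * ((Real.sqrt (2*π) : ℂ)) = 2 * (π : ℂ) := by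
    rw [← Complex.ofReal_mul, Real.mul_self_sqrt (by positivity)]
    push_cast
    ring
  have hSne : ((Real.sqrt (2*π) : ℂ)) ≠ 0 := by
    simp only [ne_eq, Complex.ofReal_eq_zero]
    positivity
  have h2 : (1 / (2 * (π:ℂ))) * ((Real.sqrt (2*π) : ℂ)) = ((Real.sqrt (2*π) : ℂ))⁻¹ := by
    rw [← hS, one_div, mul_inv_rev]
    field_simp
  have h2' : (1 / (2 * (π:ℂ)))^m * ((Real.sqrt (2*π) : ℂ))^m = (((Real.sqrt (2*π) : ℂ))⁻¹)^m := by
    rw [← mul_pow, h2]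
  have h1 : Complex.I ^ (m * (m-1)/2) * (-Complex.I) ^ (m * (m-1)/2) = 1 := by
    rw [← mul_pow, mul_neg, Complex.I_mul_I, neg_neg, one_pow]
  calc (1 / (2 * (Real.pi : ℂ))) ^ m * Complex.I ^ (m * (m - 1) / 2) *
        (((-Complex.I) ^ (m * (m-1)/2) * ((Real.sqrt (2*π) : ℂ)) ^ m *
          (∏ k : Fin m, Complex.exp (-(x k : ℂ) ^ 2 / 2))) *
          ∏ p ∈ Finset.filter (fun p : Fin m × Fin m => p.1 < p.2) Finset.univ,
            ((x p.2 : ℂ) - (x p.1 : ℂ)))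
      = ((1 / (2 * (π:ℂ)))^m * ((Real.sqrt (2*π) : ℂ))^m) *
          (Complex.I ^ (m * (m-1)/2) * (-Complex.I) ^ (m * (m-1)/2)) *
          ((∏ k : Fin m, Complex.exp (-(x k : ℂ) ^ 2 / 2)) *
          ∏ p ∈ Finset.filter (fun p : Fin m × Fin m => p.1 < p.2) Finset.univ,
            ((x p.2 : ℂ) - (x p.1 : ℂ))) := by ring
    _ = ((Real.sqrt (2 * Real.pi) : ℂ))⁻¹ ^ m *
        (∏ k : Fin m, Complex.exp (-(x k : ℂ) ^ 2 / 2)) *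
        ∏ p ∈ Finset.filter (fun p : Fin m × Fin m => p.1 < p.2) Finset.univ,
          ((x p.2 : ℂ) - (x p.1 : ℂ)) := by rw [h2', h1, mul_one]; ring
end

section
/- For every N ≥ 1, the number of interlacing triangular arrays of rank 2 and height N equals 2^N. That is, |T_N(2)| = 2^N. -/
/-- The horizontal coordinate `c(i,j,k) = i·N + j − (N+k)/2` of the entry
`T^{(i)}_{j,k}` of a triangular array of height `N`. -/
def hCoord (N i j k : ℕ) : ℚ := (i * N + j : ℚ) - (N + k : ℚ) / 2

/-- `f : ℕ → ℕ → ℕ → ℕ`, with `f i j k` the entry `T^{(i)}_{j,k}` (for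
`1 ≤ i ≤ n`, `1 ≤ j ≤ k ≤ N`; `f` vanishes outside this range), is an
interlacing triangular array of rank `n` and height `N`:
(a) in row `k`, each value `a ∈ {1,…,n}` appears exactly `k` times;
(b) equal values in row `k` interlace with an equal value in row `k−1`,
with respect to the horizontal coordinates `hCoord`. -/
def IsITA (n N : ℕ) (f : ℕ → ℕ → ℕ → ℕ) : Prop :=
  (∀ i j k, (1 ≤ i ∧ i ≤ n ∧ 1 ≤ j ∧ j ≤ k ∧ k ≤ N) → 1 ≤ f i j k ∧ f i j k ≤ n) ∧
  (∀ i j k, ¬(1 ≤ i ∧ i ≤ n ∧ 1 ≤ j ∧ j ≤ k ∧ k ≤ N) → f i j k = 0) ∧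
  (∀ k, 1 ≤ k → k ≤ N → ∀ a, 1 ≤ a → a ≤ n →
    ((Finset.Icc 1 n ×ˢ Finset.Icc 1 k).filter (fun p : ℕ × ℕ => f p.1 p.2 k = a)).card
      = k) ∧
  (∀ k, 1 < k → k ≤ N → ∀ i j i' j',
    1 ≤ i → i ≤ n → 1 ≤ j → j ≤ k → 1 ≤ i' → i' ≤ n → 1 ≤ j' → j' ≤ k →
    f i j k = f i' j' k → hCoord N i j k < hCoord N i' j' k →
    ∃ i'' j'', 1 ≤ i'' ∧ i'' ≤ n ∧ 1 ≤ j'' ∧ j'' ≤ k - 1 ∧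
      f i'' j'' (k - 1) = f i j k ∧
      hCoord N i j k < hCoord N i'' j'' (k - 1) ∧
      hCoord N i'' j'' (k - 1) < hCoord N i' j' k)

section basics
variable (N : ℕ)

lemma hC_same (i j i' j' k : ℕ) :
    hCoord N i j k < hCoord N i' j' k ↔ i*N+j < i'*N+j' := by
  unfold hCoord
  rw [sub_lt_sub_iff_right]
  constructor
  · intro h; exact_mod_cast h
  · intro h; exact_mod_cast h

lemma hC_cross (i j i'' j'' k : ℕ) (hk : 1 ≤ k) :
    hCoord N i j k < hCoord N i'' j'' (k-1) ↔ i*N+j ≤ i''*N+j'' := by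
  unfold hCoord
  have hc : ((k - 1 : ℕ) : ℚ) = (k : ℚ) - 1 := by
    push_cast [hk]; ring
  rw [hc]
  constructor
  · intro h
    have h2 : (↑(i*N+j) : ℚ) < (↑(i''*N+j'') : ℚ) + 1 := by push_cast; push_cast at h; linarith
    have := Nat.cast_lt (α := ℚ) (m := i*N+j) (n := i''*N+j''+1) |>.mpr
    have h3 : (i*N+j) < (i''*N+j'') + 1 := by exact_mod_cast h2
    omega
  · intro h
    have h2 : (↑(i*N+j) : ℚ) ≤ (↑(i''*N+j'') : ℚ) := by exact_mod_cast h
    push_cast at h2 ⊢; linarith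

lemma hC_cross2 (i' j' i'' j'' k : ℕ) (hk : 1 ≤ k) :
    hCoord N i'' j'' (k-1) < hCoord N i' j' k ↔ i''*N+j'' < i'*N+j' := by
  unfold hCoord
  have hc : ((k - 1 : ℕ) : ℚ) = (k : ℚ) - 1 := by push_cast [hk]; ring
  rw [hc]
  constructor
  · intro h
    have h2 : (↑(i''*N+j'') : ℚ) < (↑(i'*N+j') : ℚ) := by push_cast; push_cast at h; linarith
    exact_mod_cast h2
  · intro h
    have h2 : (↑(i''*N+j'') : ℚ) + 1 ≤ (↑(i'*N+j') : ℚ) := by exact_mod_cast h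
    push_cast at h2 ⊢; linarith

lemma pos_inj {i j i' j' : ℕ} (hi : 1 ≤ i) (hi2 : i ≤ 2) (hi' : 1 ≤ i') (hi'2 : i' ≤ 2)
    (hj : 1 ≤ j) (hjN : j ≤ N) (hj' : 1 ≤ j') (hj'N : j' ≤ N)
    (h : i*N+j = i'*N+j') : i = i' ∧ j = j' := by
  interval_cases i <;> interval_cases i' <;> omega

end basics

/-- The key gap-counting lemma. -/
lemma gap_count (A B : Finset ℕ)
    (H : ∀ p ∈ A, ∀ p' ∈ A, p < p' → ∃ q ∈ B, p ≤ q ∧ q < p') :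
    ∀ x y : ℕ, (A.filter (fun p => x ≤ p ∧ p ≤ y + 1)).card
      ≤ (B.filter (fun q => x ≤ q ∧ q ≤ y)).card + 1 := by
  intro x y
  generalize hm : (A.filter (fun p => x ≤ p ∧ p ≤ y + 1)).card = m
  induction m using Nat.strong_induction_on generalizing x with
  | _ m IH =>
    rcases Nat.lt_or_ge m 2 with hm2 | hm2
    · omega
    · set P := A.filter (fun p => x ≤ p ∧ p ≤ y + 1) with hP
      have hPne : P.Nonempty := by
        rw [← Finset.card_pos, hm]; omega
      set p := P.min' hPne with hp
      have hpP : p ∈ P := Finset.min'_mem _ _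
      have hP'ne : (P.erase p).Nonempty := by
        rw [← Finset.card_pos, Finset.card_erase_of_mem hpP, hm]; omega
      set p' := (P.erase p).min' hP'ne with hp'
      have hp'P : p' ∈ P.erase p := Finset.min'_mem _ _
      have hp'P2 : p' ∈ P := Finset.mem_of_mem_erase hp'P
      have hpp' : p < p' := by
        have h1 : p ≤ p' := Finset.min'_le _ _ hp'P2
        have h2 : p' ≠ p := Finset.ne_of_mem_erase hp'P
        omega
      have hpA : p ∈ A := (Finset.mem_filter.mp hpP).1
      have hp'A : p' ∈ A := (Finset.mem_filter.mp hp'P2).1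
      obtain ⟨q, hqB, hpq, hqp'⟩ := H p hpA p' hp'A hpp'
      have hxp : x ≤ p ∧ p ≤ y + 1 := (Finset.mem_filter.mp hpP).2
      have hxp' : x ≤ p' ∧ p' ≤ y + 1 := (Finset.mem_filter.mp hp'P2).2
      -- the recursive filter at p'
      have hkey : A.filter (fun r => p' ≤ r ∧ r ≤ y + 1) = P.erase p := by
        ext r
        simp only [Finset.mem_filter, Finset.mem_erase, hP]
        constructor
        · rintro ⟨hrA, hr1, hr2⟩
          refine ⟨by omega, hrA, by omega, hr2⟩
        · rintro ⟨hrp, hrA, hr1, hr2⟩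
          refine ⟨hrA, ?_, hr2⟩
          by_contra hc
          push_neg at hc
          have : r ∈ P := Finset.mem_filter.mpr ⟨hrA, hr1, hr2⟩
          have := Finset.min'_le _ _ (Finset.mem_erase.mpr ⟨hrp, this⟩)
          omega
      have hcard' : (A.filter (fun r => p' ≤ r ∧ r ≤ y + 1)).card = m - 1 := by
        rw [hkey, Finset.card_erase_of_mem hpP, hm]
      have hIH := IH (m-1) (by omega) p' hcard'
      -- q is in B's filter at x but not at p'
      have hqx : q ∈ B.filter (fun q => x ≤ q ∧ q ≤ y) := by
        refine Finset.mem_filter.mpr ⟨hqB, by omega, by omega⟩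
      have hsub : insert q (B.filter (fun r => p' ≤ r ∧ r ≤ y))
          ⊆ B.filter (fun r => x ≤ r ∧ r ≤ y) := by
        intro r hr
        rcases Finset.mem_insert.mp hr with rfl | hr
        · exact hqx
        · have := Finset.mem_filter.mp hr
          exact Finset.mem_filter.mpr ⟨this.1, by omega, this.2.2⟩
      have hqnot : q ∉ B.filter (fun r => p' ≤ r ∧ r ≤ y) := by
        intro hc
        have := (Finset.mem_filter.mp hc).2
        omega
      have := Finset.card_le_card hsub
      rw [Finset.card_insert_of_notMem hqnot] at this
      omega

lemma filter_le_step (T : Finset ℕ) (x : ℕ) :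
    (T.filter (fun p => p ≤ x + 1)).card
      = (T.filter (fun p => p ≤ x)).card + (if x + 1 ∈ T then 1 else 0) := by
  by_cases h : x + 1 ∈ T
  · rw [if_pos h]
    have : T.filter (fun p => p ≤ x + 1) = insert (x+1) (T.filter (fun p => p ≤ x)) := by
      ext a
      simp only [Finset.mem_filter, Finset.mem_insert]
      constructor
      · rintro ⟨ha, hle⟩
        rcases Nat.lt_or_ge a (x+1) with h1 | h1
        · exact Or.inr ⟨ha, by omega⟩
        · exact Or.inl (by omega)
      · rintro (rfl | ⟨ha, hle⟩)
        · exact ⟨h, le_rfl⟩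
        · exact ⟨ha, by omega⟩
    rw [this, Finset.card_insert_of_notMem (by simp)]
  · rw [if_neg h]
    have : T.filter (fun p => p ≤ x + 1) = T.filter (fun p => p ≤ x) := by
      ext a
      simp only [Finset.mem_filter]
      constructor
      · rintro ⟨ha, hle⟩
        refine ⟨ha, ?_⟩
        rcases Nat.lt_or_ge a (x+1) with h1 | h1
        · omega
        · exfalso; have : a = x + 1 := by omega
          exact h (this ▸ ha)
      · rintro ⟨ha, hle⟩; exact ⟨ha, by omega⟩
    rw [this]; omega

lemma card_filter_prod (s t : Finset ℕ) (Q : ℕ → ℕ → Prop) [DecidablePred fun p : ℕ × ℕ => Q p.1 p.2]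
    [∀ i, DecidablePred (Q i)] :
    ((s ×ˢ t).filter (fun p : ℕ × ℕ => Q p.1 p.2)).card
      = ∑ i ∈ s, (t.filter (Q i)).card := by
  rw [Finset.card_filter, Finset.sum_product]
  congr 1; ext i
  rw [Finset.card_filter]

lemma sum_Icc12 (g : ℕ → ℕ) : ∑ i ∈ Finset.Icc 1 2, g i = g 1 + g 2 := by
  have : Finset.Icc 1 2 = ({1, 2} : Finset ℕ) := by decide
  rw [this, Finset.sum_insert (by decide), Finset.sum_singleton]

def rowIdx (k : ℕ) : Finset (ℕ × ℕ) := Finset.Icc 1 2 ×ˢ Finset.Icc 1 k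

def Spos (N : ℕ) (f : ℕ → ℕ → ℕ → ℕ) (k a : ℕ) : Finset ℕ :=
  ((rowIdx k).filter (fun p => f p.1 p.2 k = a)).image (fun p => p.1 * N + p.2)

lemma mem_rowIdx {p : ℕ × ℕ} {k : ℕ} : p ∈ rowIdx k ↔ 1 ≤ p.1 ∧ p.1 ≤ 2 ∧ 1 ≤ p.2 ∧ p.2 ≤ k := by
  simp [rowIdx, Finset.mem_product, Finset.mem_Icc]; tauto

lemma mem_Spos {N : ℕ} {f : ℕ → ℕ → ℕ → ℕ} {k a i j : ℕ} (hk : k ≤ N)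
    (hi : 1 ≤ i) (hi2 : i ≤ 2) (hj : 1 ≤ j) (hjk : j ≤ k) :
    i*N+j ∈ Spos N f k a ↔ f i j k = a := by
  unfold Spos
  rw [Finset.mem_image]
  constructor
  · rintro ⟨p, hp, hpe⟩
    rw [Finset.mem_filter, mem_rowIdx] at hp
    obtain ⟨⟨h1, h2, h3, h4⟩, h5⟩ := hp
    obtain ⟨rfl, rfl⟩ := pos_inj N h1 h2 hi hi2 h3 (le_trans h4 hk) hj (le_trans hjk hk) hpe
    exact h5
  · intro hf
    exact ⟨(i, j), Finset.mem_filter.mpr ⟨mem_rowIdx.mpr ⟨hi, hi2, hj, hjk⟩, hf⟩, rfl⟩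

lemma card_Spos {N : ℕ} {f : ℕ → ℕ → ℕ → ℕ} {k a : ℕ} (hk : k ≤ N) :
    (Spos N f k a).card = ((rowIdx k).filter (fun p => f p.1 p.2 k = a)).card := by
  apply Finset.card_image_of_injOn
  intro p hp q hq hpq
  rw [Finset.mem_coe, Finset.mem_filter, mem_rowIdx] at hp hq
  obtain ⟨⟨h1, h2, h3, h4⟩, _⟩ := hp
  obtain ⟨⟨g1, g2, g3, g4⟩, _⟩ := hq
  obtain ⟨e1, e2⟩ := pos_inj N h1 h2 g1 g2 h3 (le_trans h4 hk) g3 (le_trans g4 hk) hpq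
  exact Prod.ext e1 e2

def posSet (N k : ℕ) : Finset ℕ := Finset.Icc (N+1) (N+k) ∪ Finset.Icc (2*N+1) (2*N+k)

lemma Spos_union {N : ℕ} {f : ℕ → ℕ → ℕ → ℕ} {k : ℕ} (hk : k ≤ N)
    (hval : ∀ i j, (1 ≤ i ∧ i ≤ 2 ∧ 1 ≤ j ∧ j ≤ k ∧ k ≤ N) → 1 ≤ f i j k ∧ f i j k ≤ 2) :
    Spos N f k 1 ∪ Spos N f k 2 = posSet N k := by
  ext x
  rw [Finset.mem_union, posSet, Finset.mem_union, Finset.mem_Icc, Finset.mem_Icc]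
  constructor
  · rintro (hx | hx) <;>
    · obtain ⟨p, hp, rfl⟩ := Finset.mem_image.mp hx
      rw [Finset.mem_filter, mem_rowIdx] at hp
      obtain ⟨⟨h1, h2, h3, h4⟩, _⟩ := hp
      interval_cases hp1 : p.1
      · left; omega
      · right; omega
  · intro hx
    rcases hx with hx | hx
    · -- x = 1*N + (x - N)
      have hx' : x = 1*N + (x - N) := by omega
      have h1 : 1 ≤ x - N := by omega
      have h2 : x - N ≤ k := by omega
      have := hval 1 (x-N) ⟨le_refl 1, by omega, h1, h2, hk⟩
      rw [hx']
      rcases (by omega : f 1 (x-N) k = 1 ∨ f 1 (x-N) k = 2) with hf | hf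
      · left; exact (mem_Spos hk (by omega) (by omega) h1 h2).mpr hf
      · right; exact (mem_Spos hk (by omega) (by omega) h1 h2).mpr hf
    · have hx' : x = 2*N + (x - 2*N) := by omega
      have h1 : 1 ≤ x - 2*N := by omega
      have h2 : x - 2*N ≤ k := by omega
      have := hval 2 (x-2*N) ⟨by omega, by omega, h1, h2, hk⟩
      rw [hx']
      rcases (by omega : f 2 (x-2*N) k = 1 ∨ f 2 (x-2*N) k = 2) with hf | hf
      · left; exact (mem_Spos hk (by omega) (by omega) h1 h2).mpr hf
      · right; exact (mem_Spos hk (by omega) (by omega) h1 h2).mpr hf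

lemma Spos_disjoint {N : ℕ} {f : ℕ → ℕ → ℕ → ℕ} {k : ℕ} (hk : k ≤ N) :
    Disjoint (Spos N f k 1) (Spos N f k 2) := by
  rw [Finset.disjoint_left]
  intro x hx1 hx2
  obtain ⟨p, hp, rfl⟩ := Finset.mem_image.mp hx1
  rw [Finset.mem_filter, mem_rowIdx] at hp
  obtain ⟨⟨h1, h2, h3, h4⟩, h5⟩ := hp
  rw [mem_Spos hk h1 h2 h3 h4] at hx2
  omega

lemma card_posSet_left {N k j : ℕ} (hk : k ≤ N) (hj : j ≤ k) :
    ((posSet N k).filter (fun p => p ≤ N + j)).card = j := by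
  have : (posSet N k).filter (fun p => p ≤ N + j) = Finset.Icc (N+1) (N+j) := by
    ext x
    simp only [posSet, Finset.mem_filter, Finset.mem_union, Finset.mem_Icc]
    omega
  rw [this, Nat.card_Icc]
  omega

lemma card_posSet_right {N k j : ℕ} (hk : k ≤ N) (hj : j ≤ k) :
    ((posSet N k).filter (fun p => p ≤ 2*N + j)).card = k + j := by
  have : (posSet N k).filter (fun p => p ≤ 2*N + j)
      = Finset.Icc (N+1) (N+k) ∪ Finset.Icc (2*N+1) (2*N+j) := by
    ext x
    simp only [posSet, Finset.mem_filter, Finset.mem_union, Finset.mem_Icc]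
    omega
  rw [this, Finset.card_union_of_disjoint, Nat.card_Icc, Nat.card_Icc]
  · omega
  · rw [Finset.disjoint_left]
    intro x hx1 hx2
    rw [Finset.mem_Icc] at hx1 hx2
    omega

lemma sum_filter_le {N : ℕ} {f : ℕ → ℕ → ℕ → ℕ} {k : ℕ} (hk : k ≤ N)
    (hval : ∀ i j, (1 ≤ i ∧ i ≤ 2 ∧ 1 ≤ j ∧ j ≤ k ∧ k ≤ N) → 1 ≤ f i j k ∧ f i j k ≤ 2)
    (x : ℕ) :
    ((Spos N f k 1).filter (fun p => p ≤ x)).card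
      + ((Spos N f k 2).filter (fun p => p ≤ x)).card
      = ((posSet N k).filter (fun p => p ≤ x)).card := by
  rw [← Finset.card_union_of_disjoint, ← Finset.filter_union, Spos_union hk hval]
  exact Finset.disjoint_filter_filter (Spos_disjoint hk)

lemma Spos_card {N : ℕ} {f : ℕ → ℕ → ℕ → ℕ} {k a : ℕ} (h : IsITA 2 N f)
    (hk1 : 1 ≤ k) (hk : k ≤ N) (ha1 : 1 ≤ a) (ha2 : a ≤ 2) :
    (Spos N f k a).card = k := by
  rw [card_Spos hk]
  exact h.2.2.1 k hk1 hk a ha1 ha2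

lemma Spos_bound {N : ℕ} {f : ℕ → ℕ → ℕ → ℕ} {k a p : ℕ} (hp : p ∈ Spos N f k a) :
    N + 1 ≤ p ∧ p ≤ 2*N + k := by
  obtain ⟨q, hq, rfl⟩ := Finset.mem_image.mp hp
  rw [Finset.mem_filter, mem_rowIdx] at hq
  obtain ⟨⟨h1, h2, h3, h4⟩, _⟩ := hq
  constructor <;> nlinarith

lemma Spos_interlace {N : ℕ} {f : ℕ → ℕ → ℕ → ℕ} {k a : ℕ} (h : IsITA 2 N f)
    (hk2 : 2 ≤ k) (hk : k ≤ N) :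
    ∀ p ∈ Spos N f k a, ∀ p' ∈ Spos N f k a, p < p' →
      ∃ q ∈ Spos N f (k-1) a, p ≤ q ∧ q < p' := by
  intro p hp p' hp'
  obtain ⟨u, hu, rfl⟩ := Finset.mem_image.mp hp
  obtain ⟨v, hv, rfl⟩ := Finset.mem_image.mp hp'
  rw [Finset.mem_filter, mem_rowIdx] at hu hv
  obtain ⟨⟨h1, h2, h3, h4⟩, h5⟩ := hu
  obtain ⟨⟨g1, g2, g3, g4⟩, g5⟩ := hv
  intro hlt
  have hcc : hCoord N u.1 u.2 k < hCoord N v.1 v.2 k := (hC_same N _ _ _ _ k).mpr hlt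
  obtain ⟨i'', j'', hi''1, hi''2, hj''1, hj''2, hf'', hc1, hc2⟩ :=
    h.2.2.2 k (by omega) hk u.1 u.2 v.1 v.2 h1 h2 h3 h4 g1 g2 g3 g4 (h5.trans g5.symm) hcc
  refine ⟨i''*N + j'', ?_, ?_, ?_⟩
  · rw [mem_Spos (by omega) hi''1 hi''2 hj''1 (by omega)]
    rw [hf'', h5]
  · exact (hC_cross N u.1 u.2 i'' j'' k (by omega)).mp hc1
  · exact (hC_cross2 N v.1 v.2 i'' j'' k (by omega)).mp hc2

lemma claimB {N : ℕ} {f : ℕ → ℕ → ℕ → ℕ} {k a : ℕ} (h : IsITA 2 N f)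
    (hk2 : 2 ≤ k) (hk : k ≤ N) (ha1 : 1 ≤ a) (ha2 : a ≤ 2) (x : ℕ) :
    ((Spos N f (k-1) a).filter (fun p => p ≤ x)).card
      ≤ ((Spos N f k a).filter (fun p => p ≤ x)).card := by
  have hg := gap_count (Spos N f k a) (Spos N f (k-1) a)
    (Spos_interlace h hk2 hk) (x+1) (2*N+k)
  have e1 : (Spos N f k a).filter (fun p => x+1 ≤ p ∧ p ≤ 2*N+k+1)
      = (Spos N f k a).filter (fun p => ¬ p ≤ x) := by
    apply Finset.filter_congr
    intro p hp
    have := Spos_bound hp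
    omega
  have e2 : (Spos N f (k-1) a).filter (fun q => x+1 ≤ q ∧ q ≤ 2*N+k)
      = (Spos N f (k-1) a).filter (fun p => ¬ p ≤ x) := by
    apply Finset.filter_congr
    intro p hp
    have := Spos_bound hp
    omega
  rw [e1, e2] at hg
  have c1 := Finset.card_filter_add_card_filter_not
    (s := Spos N f k a) (p := fun p => p ≤ x)
  have c2 := Finset.card_filter_add_card_filter_not
    (s := Spos N f (k-1) a) (p := fun p => p ≤ x)
  have d1 : (Spos N f k a).card = k := Spos_card h (by omega) hk ha1 ha2
  have d2 : (Spos N f (k-1) a).card = k - 1 := by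
    rw [Spos_card h (by omega) (by omega) ha1 ha2]
  omega

lemma claimA' {N : ℕ} {f : ℕ → ℕ → ℕ → ℕ} {k a : ℕ} (h : IsITA 2 N f)
    (hk2 : 2 ≤ k) (hk : k ≤ N) (x : ℕ) :
    ((Spos N f k a).filter (fun p => p ≤ x + 1)).card
      ≤ ((Spos N f (k-1) a).filter (fun p => p ≤ x)).card + 1 := by
  have hg := gap_count (Spos N f k a) (Spos N f (k-1) a)
    (Spos_interlace h hk2 hk) 0 x
  have e1 : (Spos N f k a).filter (fun p => 0 ≤ p ∧ p ≤ x+1)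
      = (Spos N f k a).filter (fun p => p ≤ x+1) := by
    apply Finset.filter_congr; intro p hp; omega
  have e2 : (Spos N f (k-1) a).filter (fun q => 0 ≤ q ∧ q ≤ x)
      = (Spos N f (k-1) a).filter (fun p => p ≤ x) := by
    apply Finset.filter_congr; intro p hp; omega
  rw [e1, e2] at hg
  exact hg

lemma eqL {N : ℕ} {f : ℕ → ℕ → ℕ → ℕ} {k a j : ℕ} (h : IsITA 2 N f)
    (hk2 : 2 ≤ k) (hk : k ≤ N) (ha1 : 1 ≤ a) (ha2 : a ≤ 2) (hj : j ≤ k - 1) :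
    ((Spos N f (k-1) a).filter (fun p => p ≤ N + j)).card
      = ((Spos N f k a).filter (fun p => p ≤ N + j)).card := by
  have s1 := sum_filter_le hk (fun i j hij => h.1 i j k hij) (N + j)
  have s2 := sum_filter_le (k := k-1) (by omega) (fun i j hij => h.1 i j (k-1) hij) (N + j)
  rw [card_posSet_left hk (by omega)] at s1
  rw [card_posSet_left (by omega : k - 1 ≤ N) hj] at s2
  have b1 := claimB h hk2 hk (a := 1) (by omega) (by omega) (N + j)
  have b2 := claimB h hk2 hk (a := 2) (by omega) (by omega) (N + j)
  interval_cases a <;> omega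

lemma eqR {N : ℕ} {f : ℕ → ℕ → ℕ → ℕ} {k a j : ℕ} (h : IsITA 2 N f)
    (hk2 : 2 ≤ k) (hk : k ≤ N) (ha1 : 1 ≤ a) (ha2 : a ≤ 2) (hj : j ≤ k - 1) :
    ((Spos N f k a).filter (fun p => p ≤ 2*N + j + 1)).card
      = ((Spos N f (k-1) a).filter (fun p => p ≤ 2*N + j)).card + 1 := by
  have s1 := sum_filter_le hk (fun i j hij => h.1 i j k hij) (2*N + j + 1)
  have s2 := sum_filter_le (k := k-1) (by omega) (fun i j hij => h.1 i j (k-1) hij) (2*N + j)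
  have e1 : 2*N + j + 1 = 2*N + (j+1) := by omega
  rw [e1, card_posSet_right hk (by omega), ← e1] at s1
  rw [card_posSet_right (by omega : k - 1 ≤ N) hj] at s2
  have b1 := claimA' (a := 1) h hk2 hk (2*N + j)
  have b2 := claimA' (a := 2) h hk2 hk (2*N + j)
  interval_cases a <;> omega

lemma memL {N : ℕ} {f : ℕ → ℕ → ℕ → ℕ} {k a j : ℕ} (h : IsITA 2 N f)
    (hk2 : 2 ≤ k) (hk : k ≤ N) (ha1 : 1 ≤ a) (ha2 : a ≤ 2) (hj1 : 1 ≤ j) (hj : j ≤ k - 1) :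
    (N + j ∈ Spos N f (k-1) a) ↔ (N + j ∈ Spos N f k a) := by
  have e1 := eqL h hk2 hk ha1 ha2 hj
  have e0 := eqL h hk2 hk ha1 ha2 (show j - 1 ≤ k - 1 by omega)
  have t1 := filter_le_step (Spos N f (k-1) a) (N + (j-1))
  have t2 := filter_le_step (Spos N f k a) (N + (j-1))
  have ej : N + (j-1) + 1 = N + j := by omega
  rw [ej] at t1 t2
  rw [show N + (j-1) = N + (j-1) from rfl] at t1
  by_cases h1 : N + j ∈ Spos N f (k-1) a <;> by_cases h2 : N + j ∈ Spos N f k a <;>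
    simp [h1, h2] at t1 t2 <;> [skip; omega; omega; skip] <;> simp [h1, h2]

lemma memR {N : ℕ} {f : ℕ → ℕ → ℕ → ℕ} {k a j : ℕ} (h : IsITA 2 N f)
    (hk2 : 2 ≤ k) (hk : k ≤ N) (ha1 : 1 ≤ a) (ha2 : a ≤ 2) (hj1 : 1 ≤ j) (hj : j ≤ k - 1) :
    (2*N + j ∈ Spos N f (k-1) a) ↔ (2*N + j + 1 ∈ Spos N f k a) := by
  have e1 := eqR h hk2 hk ha1 ha2 hj
  have e0 := eqR h hk2 hk ha1 ha2 (show j - 1 ≤ k - 1 by omega)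
  have t1 := filter_le_step (Spos N f (k-1) a) (2*N + (j-1))
  have t2 := filter_le_step (Spos N f k a) (2*N + j)
  have ej : 2*N + (j-1) + 1 = 2*N + j := by omega
  have ej2 : 2*N + (j-1) + 1 + 1 = 2*N + j + 1 := by omega
  rw [ej] at t1
  rw [show 2*N + (j-1) + 1 = 2*N + j from ej] at e0
  by_cases h1 : 2*N + j ∈ Spos N f (k-1) a <;> by_cases h2 : 2*N + j + 1 ∈ Spos N f k a <;>
    simp [h1, h2] at t1 t2 <;> [skip; omega; omega; skip] <;> simp [h1, h2]

lemma stepL {N : ℕ} {f : ℕ → ℕ → ℕ → ℕ} {k j : ℕ} (h : IsITA 2 N f)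
    (hk2 : 2 ≤ k) (hk : k ≤ N) (hj1 : 1 ≤ j) (hj : j ≤ k - 1) :
    f 1 j (k-1) = f 1 j k := by
  have ha := h.1 1 j k ⟨le_refl 1, by omega, hj1, by omega, hk⟩
  have h2 : N + j ∈ Spos N f k (f 1 j k) := by
    rw [show N + j = 1*N + j by omega, mem_Spos hk (by omega) (by omega) hj1 (by omega)]
  have h1 := (memL h hk2 hk ha.1 ha.2 hj1 hj).mpr h2
  rw [show N + j = 1*N + j by omega,
    mem_Spos (show k - 1 ≤ N by omega) (by omega) (by omega) hj1 hj] at h1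
  exact h1

lemma stepR {N : ℕ} {f : ℕ → ℕ → ℕ → ℕ} {k j : ℕ} (h : IsITA 2 N f)
    (hk2 : 2 ≤ k) (hk : k ≤ N) (hj1 : 1 ≤ j) (hj : j ≤ k - 1) :
    f 2 j (k-1) = f 2 (j+1) k := by
  have ha := h.1 2 (j+1) k ⟨by omega, by omega, by omega, by omega, hk⟩
  have h2 : 2*N + j + 1 ∈ Spos N f k (f 2 (j+1) k) := by
    rw [show 2*N + j + 1 = 2*N + (j+1) by omega,
      mem_Spos hk (by omega) (by omega) (by omega) (by omega)]
  have h1 := (memR h hk2 hk ha.1 ha.2 hj1 hj).mpr h2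
  rw [mem_Spos (show k - 1 ≤ N by omega) (by omega) (by omega) hj1 hj] at h1
  exact h1

lemma chainL {N : ℕ} {f : ℕ → ℕ → ℕ → ℕ} (h : IsITA 2 N f) :
    ∀ d k j, k + d = N → 1 ≤ j → j ≤ k → f 1 j k = f 1 j N := by
  intro d
  induction d with
  | zero => intro k j hk _ _; simp [← hk]
  | succ d IH =>
    intro k j hk hj1 hjk
    have : f 1 j k = f 1 j (k+1) := by
      have := stepL (k := k+1) h (by omega) (by omega) hj1 (by omega)
      simpa using this
    rw [this]
    exact IH (k+1) j (by omega) hj1 (by omega)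

lemma chainR {N : ℕ} {f : ℕ → ℕ → ℕ → ℕ} (h : IsITA 2 N f) :
    ∀ j k, 1 ≤ j → j ≤ k → k ≤ N → f 2 j k = f 2 1 (k - j + 1) := by
  intro j
  induction j with
  | zero => intro k h1 _ _; omega
  | succ j IH =>
    intro k h1 hjk hkN
    rcases Nat.eq_zero_or_pos j with rfl | hj
    · simp only [Nat.zero_add]
      congr 1
      omega
    · have hk2 : 2 ≤ k := by omega
      have := stepR (k := k) h hk2 hkN hj (by omega)
      rw [← this, IH (k-1) hj (by omega) (by omega)]
      congr 1
      omega

lemma card_filter_reflect (k : ℕ) (P : ℕ → Prop) [DecidablePred P] :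
    ((Finset.Icc 1 k).filter (fun j => P (k - j + 1))).card
      = ((Finset.Icc 1 k).filter P).card := by
  apply Finset.card_bij' (i := fun a _ => k - a + 1) (j := fun b _ => k - b + 1)
  · intro a ha
    rw [Finset.mem_filter, Finset.mem_Icc] at ha ⊢
    refine ⟨⟨by omega, by omega⟩, ha.2⟩
  · intro b hb
    rw [Finset.mem_filter, Finset.mem_Icc] at hb ⊢
    refine ⟨⟨by omega, by omega⟩, ?_⟩
    have : k - (k - b + 1) + 1 = b := by omega
    rw [this]
    exact hb.2
  · intro a ha
    rw [Finset.mem_filter, Finset.mem_Icc] at ha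
    omega
  · intro b hb
    rw [Finset.mem_filter, Finset.mem_Icc] at hb
    omega

lemma Icc_filter_step (k : ℕ) (hk : 1 ≤ k) (P : ℕ → Prop) [DecidablePred P] :
    ((Finset.Icc 1 k).filter P).card
      = ((Finset.Icc 1 (k-1)).filter P).card + if P k then 1 else 0 := by
  have : Finset.Icc 1 k = insert k (Finset.Icc 1 (k-1)) := by
    ext x; rw [Finset.mem_insert, Finset.mem_Icc, Finset.mem_Icc]; omega
  rw [this, Finset.filter_insert]
  by_cases hP : P k
  · rw [if_pos hP, if_pos hP, Finset.card_insert_of_notMem]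
    intro hc
    rw [Finset.mem_filter, Finset.mem_Icc] at hc
    omega
  · rw [if_neg hP, if_neg hP]; omega

lemma card_filter_two (t : Finset ℕ) (g : ℕ → ℕ → ℕ) (a : ℕ) :
    ((Finset.Icc 1 2 ×ˢ t).filter (fun p : ℕ × ℕ => g p.1 p.2 = a)).card
      = (t.filter (fun j => g 1 j = a)).card + (t.filter (fun j => g 2 j = a)).card := by
  rw [Finset.card_filter, Finset.sum_product,
    sum_Icc12 (g := fun i => ∑ j ∈ t, if g i j = a then 1 else 0),
    ← Finset.card_filter, ← Finset.card_filter]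

lemma row_identity {N : ℕ} {f : ℕ → ℕ → ℕ → ℕ} (h : IsITA 2 N f) {k a : ℕ}
    (hk1 : 1 ≤ k) (hk : k ≤ N) (ha1 : 1 ≤ a) (ha2 : a ≤ 2) :
    ((Finset.Icc 1 k).filter (fun j => f 1 j N = a)).card
      + ((Finset.Icc 1 k).filter (fun j => f 2 1 j = a)).card = k := by
  have hc := h.2.2.1 k hk1 hk a ha1 ha2
  have hp : ((Finset.Icc 1 2 ×ˢ Finset.Icc 1 k).filter (fun p : ℕ × ℕ => f p.1 p.2 k = a)).card
      = ((Finset.Icc 1 k).filter (fun j => f 1 j k = a)).card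
        + ((Finset.Icc 1 k).filter (fun j => f 2 j k = a)).card :=
    card_filter_two (Finset.Icc 1 k) (fun i j => f i j k) a
  rw [hp] at hc
  have e1 : (Finset.Icc 1 k).filter (fun j => f 1 j k = a)
      = (Finset.Icc 1 k).filter (fun j => f 1 j N = a) := by
    apply Finset.filter_congr
    intro j hj
    rw [Finset.mem_Icc] at hj
    rw [chainL h (N - k) k j (by omega) hj.1 hj.2]
  have e2 : (Finset.Icc 1 k).filter (fun j => f 2 j k = a)
      = (Finset.Icc 1 k).filter (fun j => f 2 1 (k - j + 1) = a) := by
    apply Finset.filter_congr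
    intro j hj
    rw [Finset.mem_Icc] at hj
    rw [chainR h j k hj.1 hj.2 hk]
  rw [e1, e2, card_filter_reflect k (fun m => f 2 1 m = a)] at hc
  exact hc

lemma complement {N : ℕ} {f : ℕ → ℕ → ℕ → ℕ} (h : IsITA 2 N f) {m : ℕ}
    (hm1 : 1 ≤ m) (hm : m ≤ N) :
    f 2 1 m = 3 - f 1 m N := by
  have hb := h.1 1 m N ⟨by omega, by omega, hm1, hm, le_refl N⟩
  have hcv := h.1 2 1 m ⟨by omega, by omega, by omega, hm1, hm⟩
  have Im1 := row_identity h hm1 hm (a := 1) (by omega) (by omega)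
  have Im2 := row_identity h hm1 hm (a := 2) (by omega) (by omega)
  have Ip : ∀ a, 1 ≤ a → a ≤ 2 →
      ((Finset.Icc 1 (m-1)).filter (fun j => f 1 j N = a)).card
        + ((Finset.Icc 1 (m-1)).filter (fun j => f 2 1 j = a)).card = m - 1 := by
    intro a h1 h2
    rcases Nat.eq_or_lt_of_le hm1 with he | hm2
    · rw [← he]
      simp
    · exact row_identity h (by omega) (by omega) h1 h2
  have s11 := Icc_filter_step m hm1 (fun j => f 1 j N = 1)
  have s12 := Icc_filter_step m hm1 (fun j => f 2 1 j = 1)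
  have s21 := Icc_filter_step m hm1 (fun j => f 1 j N = 2)
  have s22 := Icc_filter_step m hm1 (fun j => f 2 1 j = 2)
  have Ip1 := Ip 1 (by omega) (by omega)
  have Ip2 := Ip 2 (by omega) (by omega)
  have hb2 : f 1 m N = 1 ∨ f 1 m N = 2 := by omega
  have hc2 : f 2 1 m = 1 ∨ f 2 1 m = 2 := by omega
  rcases hb2 with e1 | e1 <;> rcases hc2 with e2 | e2 <;>
    rw [e1, e2] <;> simp only [e1, e2] at s11 s12 s21 s22 <;>
    simp at s11 s12 s21 s22 <;> omega

def Bt (N : ℕ) (t : Fin N → Bool) (m : ℕ) : ℕ :=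
  if h : 1 ≤ m ∧ m ≤ N then (if t ⟨m-1, by omega⟩ then 1 else 2) else 0

def Phi (N : ℕ) (t : Fin N → Bool) : ℕ → ℕ → ℕ → ℕ := fun i j k =>
  if 1 ≤ i ∧ i ≤ 2 ∧ 1 ≤ j ∧ j ≤ k ∧ k ≤ N then
    (if i = 1 then Bt N t j else 3 - Bt N t (k-j+1)) else 0

lemma Bt_mem {N : ℕ} (t : Fin N → Bool) {m : ℕ} (h1 : 1 ≤ m) (h2 : m ≤ N) :
    Bt N t m = 1 ∨ Bt N t m = 2 := by
  unfold Bt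
  rw [dif_pos ⟨h1, h2⟩]
  by_cases ht : t ⟨m-1, by omega⟩ <;> simp [ht]

lemma Phi_left {N : ℕ} (t : Fin N → Bool) {j k : ℕ} (h1 : 1 ≤ j) (h2 : j ≤ k) (h3 : k ≤ N) :
    Phi N t 1 j k = Bt N t j := by
  unfold Phi
  rw [if_pos ⟨by omega, by omega, h1, h2, h3⟩, if_pos rfl]

lemma Phi_right {N : ℕ} (t : Fin N → Bool) {j k : ℕ} (h1 : 1 ≤ j) (h2 : j ≤ k) (h3 : k ≤ N) :
    Phi N t 2 j k = 3 - Bt N t (k-j+1) := by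
  unfold Phi
  rw [if_pos ⟨by omega, by omega, h1, h2, h3⟩, if_neg (by omega)]

lemma Phi_isITA {N : ℕ} (t : Fin N → Bool) : IsITA 2 N (Phi N t) := by
  refine ⟨?_, ?_, ?_, ?_⟩
  · rintro i j k ⟨h1, h2, h3, h4, h5⟩
    interval_cases i
    · rw [Phi_left t h3 h4 h5]
      have := Bt_mem t h3 (by omega)
      omega
    · rw [Phi_right t h3 h4 h5]
      have := Bt_mem t (m := k-j+1) (by omega) (by omega)
      omega
  · intro i j k hc
    unfold Phi
    rw [if_neg hc]
  · intro k hk1 hk a ha1 ha2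
    have hp : ((Finset.Icc 1 2 ×ˢ Finset.Icc 1 k).filter
        (fun p : ℕ × ℕ => Phi N t p.1 p.2 k = a)).card
        = ((Finset.Icc 1 k).filter (fun j => Phi N t 1 j k = a)).card
          + ((Finset.Icc 1 k).filter (fun j => Phi N t 2 j k = a)).card :=
      card_filter_two (Finset.Icc 1 k) (fun i j => Phi N t i j k) a
    rw [hp]
    have e1 : (Finset.Icc 1 k).filter (fun j => Phi N t 1 j k = a)
        = (Finset.Icc 1 k).filter (fun j => Bt N t j = a) := by
      apply Finset.filter_congr
      intro j hj
      rw [Finset.mem_Icc] at hj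
      rw [Phi_left t hj.1 hj.2 hk]
    have e2 : (Finset.Icc 1 k).filter (fun j => Phi N t 2 j k = a)
        = (Finset.Icc 1 k).filter (fun j => 3 - Bt N t (k-j+1) = a) := by
      apply Finset.filter_congr
      intro j hj
      rw [Finset.mem_Icc] at hj
      rw [Phi_right t hj.1 hj.2 hk]
    rw [e1, e2, card_filter_reflect k (fun m => 3 - Bt N t m = a)]
    have e3 : (Finset.Icc 1 k).filter (fun m => 3 - Bt N t m = a)
        = (Finset.Icc 1 k).filter (fun m => ¬ (Bt N t m = a)) := by
      apply Finset.filter_congr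
      intro m hm
      rw [Finset.mem_Icc] at hm
      have := Bt_mem t hm.1 (le_trans hm.2 hk)
      constructor
      · intro hh; omega
      · intro hh; omega
    rw [e3, Finset.card_filter_add_card_filter_not, Nat.card_Icc]
    omega
  · intro k hk1 hk i j i' j' hi1 hi2 hj1 hj2 hi'1 hi'2 hj'1 hj'2 heq hcc
    have hplt : i*N+j < i'*N+j' := (hC_same N i j i' j' k).mp hcc
    have hkN : 1 ≤ k := by omega
    rcases (by omega : i' = 1 ∨ i' = 2) with rfl | rfl
    · -- i' = 1, so i = 1
      have hi : i = 1 := by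
        rcases (by omega : i = 1 ∨ i = 2) with rfl | rfl
        · rfl
        · exfalso; have : j' ≤ N := le_trans hj'2 hk; omega
      subst hi
      have hjj' : j < j' := by omega
      refine ⟨1, j, by omega, by omega, hj1, by omega, ?_, ?_, ?_⟩
      · rw [Phi_left t hj1 (by omega) (by omega), Phi_left t hj1 hj2 hk]
      · rw [hC_cross N 1 j 1 j k hkN]
      · rw [hC_cross2 N 1 j' 1 j k hkN]
        omega
    · rcases (by omega : j' = 1 ∨ 2 ≤ j') with rfl | hj'
      · -- i' = 2, j' = 1 : i must be 1
        have hi : i = 1 := by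
          rcases (by omega : i = 1 ∨ i = 2) with rfl | rfl
          · rfl
          · exfalso; omega
        subst hi
        have hBj := Bt_mem t hj1 (le_trans hj2 hk)
        have hBk := Bt_mem t (m := k) (by omega) hk
        rw [Phi_left t hj1 hj2 hk, Phi_right t (by omega) (by omega) hk] at heq
        have hkk : k - 1 + 1 = k := by omega
        rw [hkk] at heq
        have hjk : j ≤ k - 1 := by
          rcases (by omega : j = k ∨ j ≤ k - 1) with rfl | hh
          · omega
          · exact hh
        refine ⟨1, j, by omega, by omega, hj1, hjk, ?_, ?_, ?_⟩
        · rw [Phi_left t hj1 (by omega) (by omega), Phi_left t hj1 hj2 hk]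
        · rw [hC_cross N 1 j 1 j k hkN]
        · rw [hC_cross2 N 2 1 1 j k hkN]
          have : j ≤ N := le_trans hj2 hk
          omega
      · -- i' = 2, j' ≥ 2
        refine ⟨2, j'-1, by omega, by omega, by omega, by omega, ?_, ?_, ?_⟩
        · rw [Phi_right t (j := j'-1) (k := k-1) (by omega) (by omega) (by omega),
            heq, Phi_right t hj'1 hj'2 hk]
          congr 2
          omega
        · rw [hC_cross N i j 2 (j'-1) k hkN]
          omega
        · rw [hC_cross2 N 2 j' 2 (j'-1) k hkN]
          omega

lemma Bt_recover {N : ℕ} {f : ℕ → ℕ → ℕ → ℕ} (h : IsITA 2 N f) {j : ℕ}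
    (h1 : 1 ≤ j) (h2 : j ≤ N) :
    Bt N (fun m => decide (f 1 (m.val+1) N = 1)) j = f 1 j N := by
  have hv := h.1 1 j N ⟨by omega, by omega, h1, h2, le_refl N⟩
  unfold Bt
  rw [dif_pos ⟨h1, h2⟩]
  have hj : j - 1 + 1 = j := by omega
  simp only [hj]
  by_cases hf : f 1 j N = 1
  · simp [hf]
  · simp [hf]
    omega

lemma ITA_eq_Phi {N : ℕ} {f : ℕ → ℕ → ℕ → ℕ} (h : IsITA 2 N f) :
    f = Phi N (fun m => decide (f 1 (m.val+1) N = 1)) := by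
  funext i j k
  set t := fun m : Fin N => decide (f 1 (m.val+1) N = 1) with ht
  by_cases hc : 1 ≤ i ∧ i ≤ 2 ∧ 1 ≤ j ∧ j ≤ k ∧ k ≤ N
  · obtain ⟨h1, h2, h3, h4, h5⟩ := hc
    interval_cases i
    · rw [Phi_left t h3 h4 h5, Bt_recover h h3 (le_trans h4 h5)]
      exact chainL h (N - k) k j (by omega) h3 h4
    · rw [Phi_right t h3 h4 h5, Bt_recover h (by omega) (by omega)]
      rw [chainR h j k h3 h4 h5, complement h (by omega) (by omega)]
  · rw [h.2.1 i j k hc]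
    unfold Phi
    rw [if_neg hc]

lemma Phi_inj (N : ℕ) : Function.Injective (Phi N) := by
  intro t t' he
  funext m
  have h1 : 1 ≤ m.val + 1 := by omega
  have h2 : m.val + 1 ≤ N := m.2
  have := congrFun (congrFun (congrFun he 1) (m.val+1)) N
  rw [Phi_left t h1 h2 (le_refl N), Phi_left t' h1 h2 (le_refl N)] at this
  unfold Bt at this
  rw [dif_pos ⟨h1, h2⟩, dif_pos ⟨h1, h2⟩] at this
  have hm : (⟨m.val + 1 - 1, by omega⟩ : Fin N) = m := by
    ext; simp
  rw [hm] at this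
  by_cases ha : t m <;> by_cases hb : t' m <;> simp [ha, hb] at this ⊢

/-- the number of interlacing triangular arrays of rank `2` and
height `N` equals `2^N`. -/
theorem card_ITA_rank_two (N : ℕ) (hN : 1 ≤ N) :
    {f : ℕ → ℕ → ℕ → ℕ | IsITA 2 N f}.ncard = 2 ^ N := by
  classical
  have hset : {f : ℕ → ℕ → ℕ → ℕ | IsITA 2 N f}
      = ↑(Finset.image (Phi N) Finset.univ) := by
    ext f
    simp only [Set.mem_setOf_eq, Finset.coe_image, Finset.coe_univ, Set.image_univ,
      Set.mem_range]
    constructor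
    · intro hf
      exact ⟨_, (ITA_eq_Phi hf).symm⟩
    · rintro ⟨t, rfl⟩
      exact Phi_isITA t
  rw [hset, Set.ncard_coe_finset, Finset.card_image_of_injective _ (Phi_inj N),
    Finset.card_univ]
  simp [Fintype.card_fun]
end
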